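/- Let A be a real symmetric positive definite n×n matrix with eigendecomposition A = Q D Qᵀ (Q orthogonal, D diagonal with positive entries). Then for any τ > 0, ‖exp(−τA) − P(τA)‖ ≤ κ(Q)·M·λ_max³·τ³/6, where P(x) = 2(x² + 2x + 2)⁻¹ applied functionally, κ(Q) = ‖Q‖·‖Qᵀ‖ in the operator ∞-norm, λ_max is the largest eigenvalue of A, and M = sup_{ξ≥0}|e^{−ξ} + P'''(ξ)|. -/

import Mathlib

open Matrix

attribute [local instance]
  Matrix.linftyOpNormedAddCommGroup Matrix.linftyOpNormedRing Matrix.linftyOpNormedAlgebra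

/-- The matrix `(0,2)` Padé approximant of the (negative) exponential:
`P(B) = 2 (B² + 2B + 2I)⁻¹`. -/
noncomputable def padeMatrix {n : ℕ} (B : Matrix (Fin n) (Fin n) ℝ) : Matrix (Fin n) (Fin n) ℝ :=
  (2 : Matrix (Fin n) (Fin n) ℝ) * (B ^ 2 + 2 * B + 2)⁻¹

namespace PadeAux

noncomputable def f0 (x : ℝ) : ℝ := Real.exp (-x) - 2 / (x ^ 2 + 2 * x + 2)
noncomputable def f1 (x : ℝ) : ℝ := -Real.exp (-x) + (4 * x + 4) / (x ^ 2 + 2 * x + 2) ^ 2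
noncomputable def f2 (x : ℝ) : ℝ :=
  Real.exp (-x) - (12 * x ^ 2 + 24 * x + 8) / (x ^ 2 + 2 * x + 2) ^ 3
noncomputable def f3 (x : ℝ) : ℝ :=
  -Real.exp (-x) + 48 * x * (x + 1) * (x + 2) / (x ^ 2 + 2 * x + 2) ^ 4

lemma den_pos (x : ℝ) : 0 < x ^ 2 + 2 * x + 2 := by nlinarith [sq_nonneg (x + 1)]
lemma den_ne (x : ℝ) : x ^ 2 + 2 * x + 2 ≠ 0 := (den_pos x).ne'

lemma expNeg_hasDerivAt (x : ℝ) : HasDerivAt (fun t => Real.exp (-t)) (-Real.exp (-x)) x := by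
  have h := (Real.hasDerivAt_exp (-x)).comp x (hasDerivAt_neg x)
  simp only [mul_neg, mul_one] at h
  exact h

lemma poly_hasDerivAt (x : ℝ) : HasDerivAt (fun t : ℝ => t ^ 2 + 2 * t + 2) (2 * x + 2) x := by
  have h := ((hasDerivAt_pow 2 x).add (((hasDerivAt_id x).const_mul 2))).add_const 2
  exact h.congr_deriv (by ring)

lemma hf0' (x : ℝ) : HasDerivAt f0 (f1 x) x := by
  have h := (expNeg_hasDerivAt x).sub
    ((hasDerivAt_const x (2:ℝ)).div (poly_hasDerivAt x) (den_ne x))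
  refine h.congr_deriv ?_
  unfold f1
  field_simp
  ring

lemma hf1' (x : ℝ) : HasDerivAt f1 (f2 x) x := by
  have hnum : HasDerivAt (fun t : ℝ => 4 * t + 4) 4 x := by
    simpa using ((hasDerivAt_id x).const_mul (4:ℝ)).add_const 4
  have h := ((expNeg_hasDerivAt x).neg).add
    (hnum.div ((poly_hasDerivAt x).pow 2) (pow_ne_zero 2 (den_ne x)))
  refine h.congr_deriv ?_
  unfold f2
  simp only [Pi.pow_apply, Nat.cast_ofNat, Nat.reduceSub]
  have hp := den_ne x
  obtain ⟨p, hpdef⟩ : ∃ p, p = x ^ 2 + 2 * x + 2 := ⟨_, rfl⟩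
  rw [← hpdef] at hp ⊢
  field_simp
  subst hpdef
  ring

lemma hf2' (x : ℝ) : HasDerivAt f2 (f3 x) x := by
  have hnum : HasDerivAt (fun t : ℝ => 12 * t ^ 2 + 24 * t + 8) (24 * x + 24) x := by
    have h := (((hasDerivAt_pow 2 x).const_mul 12).add
      ((hasDerivAt_id x).const_mul 24)).add_const 8
    exact h.congr_deriv (by ring)
  have h := (expNeg_hasDerivAt x).sub
    (hnum.div ((poly_hasDerivAt x).pow 3) (pow_ne_zero 3 (den_ne x)))
  refine h.congr_deriv ?_
  unfold f3
  simp only [Pi.pow_apply, Nat.cast_ofNat, Nat.reduceSub]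
  have hp := den_ne x
  obtain ⟨p, hpdef⟩ : ∃ p, p = x ^ 2 + 2 * x + 2 := ⟨_, rfl⟩
  rw [← hpdef] at hp ⊢
  field_simp
  subst hpdef
  ring

lemma cd_f0 : ContDiff ℝ 2 f0 := by
  unfold f0
  exact (Real.contDiff_exp.comp contDiff_neg).sub
    (contDiff_const.div (by fun_prop) den_ne)

lemma idw_step {f g : ℝ → ℝ} (hfg : ∀ t, HasDerivAt f (g t) t) {s : Set ℝ}
    (hs : UniqueDiffOn ℝ s) (n : ℕ) :
    Set.EqOn (iteratedDerivWithin (n + 1) f s) (iteratedDerivWithin n g s) s := by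
  intro y hy
  rw [iteratedDerivWithin_succ']
  exact iteratedDerivWithin_congr
    (fun t ht => ((hfg t).hasDerivWithinAt).derivWithin (hs.uniqueDiffWithinAt ht)) hy

lemma f0_taylor_bound {M : ℝ} (hub : ∀ ξ : ℝ, 0 ≤ ξ → |f3 ξ| ≤ M) {x : ℝ} (hx : 0 ≤ x) :
    |f0 x| ≤ M * x ^ 3 / 6 := by
  rcases hx.eq_or_lt with h | h
  · simp only [← h]
    norm_num [f0]
  · set s : Set ℝ := Set.Icc 0 x with hs_def
    have hs : UniqueDiffOn ℝ s := uniqueDiffOn_Icc h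
    have e1 : Set.EqOn (iteratedDerivWithin 1 f0 s) f1 s := by
      intro y hy
      rw [idw_step hf0' hs 0 hy, iteratedDerivWithin_zero]
    have e2 : Set.EqOn (iteratedDerivWithin 2 f0 s) f2 s := by
      intro y hy
      rw [idw_step hf0' hs 1 hy, idw_step hf1' hs 0 hy, iteratedDerivWithin_zero]
    have e3 : Set.EqOn (iteratedDerivWithin 3 f0 s) f3 s := by
      intro y hy
      rw [idw_step hf0' hs 2 hy, idw_step hf1' hs 1 hy, idw_step hf2' hs 0 hy,
        iteratedDerivWithin_zero]
    have hdiff : DifferentiableOn ℝ (iteratedDerivWithin 2 f0 s) (Set.Ioo 0 x) := by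
      have hf2d : DifferentiableOn ℝ f2 (Set.Ioo 0 x) :=
        fun t _ => (hf2' t).differentiableAt.differentiableWithinAt
      exact hf2d.congr fun t ht => e2 (Set.Ioo_subset_Icc_self ht)
    obtain ⟨x', hx', hT⟩ := taylor_mean_remainder_lagrange (n := 2) h.ne'.symm
      (by rw [Set.uIcc_of_le h.le]; exact cd_f0.contDiffOn)
      (by rw [Set.uIcc_of_le h.le, Set.uIoo_of_le h.le]; exact hdiff)
    rw [Set.uIcc_of_le h.le, ← hs_def] at hT
    rw [Set.uIoo_of_le h.le] at hx'
    have h0mem : (0 : ℝ) ∈ s := Set.left_mem_Icc.mpr h.le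
    have hpoly : taylorWithinEval f0 2 s 0 x = 0 := by
      rw [taylor_within_apply]
      have i0 : iteratedDerivWithin 0 f0 s 0 = 0 := by
        rw [iteratedDerivWithin_zero]; norm_num [f0]
      have i1 : iteratedDerivWithin 1 f0 s 0 = 0 := by
        rw [e1 h0mem]; norm_num [f1]
      have i2 : iteratedDerivWithin 2 f0 s 0 = 0 := by
        rw [e2 h0mem]; norm_num [f2]
      simp [Finset.sum_range_succ, i0, i1, i2]
    rw [hpoly, sub_zero] at hT
    have hx'mem : x' ∈ s := Set.Ioo_subset_Icc_self hx'
    rw [e3 hx'mem] at hT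
    rw [hT]
    have hb : |f3 x'| ≤ M := hub x' hx'.1.le
    have hM0 : 0 ≤ M := (abs_nonneg _).trans (hub 0 le_rfl)
    have hfact : (((2 + 1).factorial : ℕ) : ℝ) = 6 := by norm_num [Nat.factorial]
    rw [hfact, sub_zero, abs_div, abs_mul,
      abs_of_nonneg (show (0:ℝ) ≤ x ^ 3 by positivity),
      abs_of_nonneg (by norm_num : (0:ℝ) ≤ 6)]
    gcongr


noncomputable def Sset : Set ℝ := {y : ℝ | ∃ ξ : ℝ, 0 ≤ ξ ∧
  y = |Real.exp (-ξ) + (-(48 * ξ * (ξ + 1) * (ξ + 2)) / (ξ ^ 2 + 2 * ξ + 2) ^ 4)|}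

lemma f3_abs (ξ : ℝ) : |f3 ξ| =
    |Real.exp (-ξ) + (-(48 * ξ * (ξ + 1) * (ξ + 2)) / (ξ ^ 2 + 2 * ξ + 2) ^ 4)| := by
  have h : f3 ξ = -(Real.exp (-ξ) +
      (-(48 * ξ * (ξ + 1) * (ξ + 2)) / (ξ ^ 2 + 2 * ξ + 2) ^ 4)) := by
    unfold f3; ring
  rw [h, abs_neg]

lemma Sset_bddAbove : BddAbove Sset := by
  refine ⟨49, ?_⟩
  rintro y ⟨ξ, hξ, rfl⟩
  have hd := den_pos ξ
  have h1 : Real.exp (-ξ) ≤ 1 := by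
    calc Real.exp (-ξ) ≤ Real.exp 0 := Real.exp_le_exp.mpr (by linarith)
    _ = 1 := Real.exp_zero
  have h2 : |(-(48 * ξ * (ξ + 1) * (ξ + 2)) / (ξ ^ 2 + 2 * ξ + 2) ^ 4)| ≤ 48 := by
    rw [abs_div, abs_neg,
      abs_of_nonneg (by positivity : (0:ℝ) ≤ 48 * ξ * (ξ + 1) * (ξ + 2)),
      abs_of_nonneg (by positivity : (0:ℝ) ≤ (ξ ^ 2 + 2 * ξ + 2) ^ 4),
      div_le_iff₀ (by positivity)]
    have e2 : (ξ + 1) ^ 2 ≤ ξ ^ 2 + 2 * ξ + 2 := by nlinarith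
    have e3 : (ξ + 1) ^ 3 ≤ (ξ + 1) ^ 8 :=
      pow_le_pow_right₀ (by linarith) (by norm_num)
    have e4 : (ξ + 1) ^ 8 ≤ (ξ ^ 2 + 2 * ξ + 2) ^ 4 := by
      calc (ξ + 1) ^ 8 = ((ξ + 1) ^ 2) ^ 4 := by ring
      _ ≤ (ξ ^ 2 + 2 * ξ + 2) ^ 4 := pow_le_pow_left₀ (by positivity) e2 4
    have e5 : ξ * (ξ + 1) * (ξ + 2) ≤ (ξ + 1) ^ 3 := by nlinarith
    nlinarith
  calc |Real.exp (-ξ) + (-(48 * ξ * (ξ + 1) * (ξ + 2)) / (ξ ^ 2 + 2 * ξ + 2) ^ 4)|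
      ≤ |Real.exp (-ξ)| + |(-(48 * ξ * (ξ + 1) * (ξ + 2)) / (ξ ^ 2 + 2 * ξ + 2) ^ 4)| :=
        abs_add_le _ _
    _ ≤ 1 + 48 := by
        have h1' : |Real.exp (-ξ)| ≤ 1 := by
          rw [abs_of_nonneg (Real.exp_nonneg _)]; exact h1
        linarith
    _ ≤ 49 := by norm_num

end PadeAux

theorem pade_matrix_exp_error {n : ℕ} (A Q D : Matrix (Fin n) (Fin n) ℝ)
    (hA : A = Q * D * Qᵀ) (hQ : Qᵀ * Q = 1)
    (hDdiag : ∀ i j, i ≠ j → D i j = 0) (hDpos : ∀ i, 0 < D i i)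
    (lmax : ℝ) (hlmax : IsGreatest {x : ℝ | ∃ i, x = D i i} lmax)
    (M : ℝ)
    (hM : M = sSup {y : ℝ | ∃ ξ : ℝ, 0 ≤ ξ ∧
      y = |Real.exp (-ξ) + (-(48 * ξ * (ξ + 1) * (ξ + 2)) / (ξ ^ 2 + 2 * ξ + 2) ^ 4)|})
    (τ : ℝ) (hτ : 0 < τ) :
    ‖NormedSpace.exp (-(τ • A)) - padeMatrix (τ • A)‖ ≤
      (‖Q‖ * ‖Qᵀ‖) * M * lmax ^ 3 * τ ^ 3 / 6 := by
  classical
  have hub : ∀ ξ : ℝ, 0 ≤ ξ → |PadeAux.f3 ξ| ≤ M := by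
    intro ξ hξ
    rw [hM, PadeAux.f3_abs]
    exact le_csSup PadeAux.Sset_bddAbove ⟨ξ, hξ, rfl⟩
  have hM0 : 0 ≤ M := le_trans (abs_nonneg _) (hub 0 le_rfl)
  obtain ⟨i0, hi0⟩ := hlmax.1
  have hlpos : 0 < lmax := hi0 ▸ hDpos i0
  set d : Fin n → ℝ := fun i => D i i with hd
  have hDd : D = Matrix.diagonal d := by
    ext i j
    by_cases hij : i = j
    · subst hij; rw [Matrix.diagonal_apply_eq]
    · rw [Matrix.diagonal_apply_ne _ hij]; exact hDdiag i j hij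
  have hQQt : Q * Qᵀ = 1 := mul_eq_one_comm.mp hQ
  have hQl : ∀ X : Matrix (Fin n) (Fin n) ℝ, Qᵀ * (Q * X) = X := fun X => by
    rw [← Matrix.mul_assoc, hQ, Matrix.one_mul]
  set u : (Matrix (Fin n) (Fin n) ℝ)ˣ := ⟨Q, Qᵀ, hQQt, hQ⟩ with hu
  have hB : τ • A = Q * (τ • D) * Qᵀ := by
    rw [hA, mul_smul_comm, smul_mul_assoc]
  have hexp : NormedSpace.exp (-(τ • A)) = Q * NormedSpace.exp (-(τ • D)) * Qᵀ := by
    have hc := Matrix.exp_units_conj u (-(τ • D))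
    have h1 : ((u : (Matrix (Fin n) (Fin n) ℝ)ˣ) : Matrix (Fin n) (Fin n) ℝ) = Q := rfl
    have h2 : ((u⁻¹ : (Matrix (Fin n) (Fin n) ℝ)ˣ) : Matrix (Fin n) (Fin n) ℝ) = Qᵀ := rfl
    rw [h1, h2] at hc
    rw [← hc]
    congr 1
    rw [hB, mul_neg, neg_mul]
  have hX : (τ • A) ^ 2 + 2 * (τ • A) + 2 =
      Q * ((τ • D) ^ 2 + 2 * (τ • D) + 2) * Qᵀ := by
    rw [hB]
    simp only [pow_two, Matrix.mul_add, Matrix.add_mul, two_mul, Matrix.mul_assoc, hQl, hQQt]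
    abel_nf
    simp [two_smul]
    exact (one_add_one_eq_two).symm
  have hXinv : ((τ • A) ^ 2 + 2 * (τ • A) + 2)⁻¹ =
      Q * ((τ • D) ^ 2 + 2 * (τ • D) + 2)⁻¹ * Qᵀ := by
    rw [hX, Matrix.mul_inv_rev, Matrix.mul_inv_rev,
      Matrix.inv_eq_left_inv hQQt, Matrix.inv_eq_left_inv hQ, Matrix.mul_assoc]
  have hpade : padeMatrix (τ • A) = Q * padeMatrix (τ • D) * Qᵀ := by
    unfold padeMatrix
    rw [hXinv]
    simp only [two_mul, Matrix.mul_add, Matrix.add_mul]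
  have hdiffconj : NormedSpace.exp (-(τ • A)) - padeMatrix (τ • A) =
      Q * (NormedSpace.exp (-(τ • D)) - padeMatrix (τ • D)) * Qᵀ := by
    rw [hexp, hpade, Matrix.mul_sub, Matrix.sub_mul]
  have hsmul : -(τ • D) = Matrix.diagonal (fun i => -(τ * d i)) := by
    rw [hDd, ← Matrix.diagonal_smul, ← Matrix.diagonal_neg]
    rfl
  have hexpD : NormedSpace.exp (-(τ • D)) =
      Matrix.diagonal (fun i => Real.exp (-(τ * d i))) := by
    rw [hsmul, Matrix.exp_diagonal, Pi.exp_def]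
    exact congrArg Matrix.diagonal
      (funext fun i => (congrFun Real.exp_eq_exp_ℝ (-(τ * d i))).symm)
  have hDsm : τ • D = Matrix.diagonal (fun i => τ * d i) := by
    rw [hDd, ← Matrix.diagonal_smul]
    rfl
  have h2diag : (2 : Matrix (Fin n) (Fin n) ℝ) = Matrix.diagonal (fun _ => (2:ℝ)) := by
    rw [show (2 : Matrix (Fin n) (Fin n) ℝ) = 1 + 1 from by norm_num, ← Matrix.diagonal_one,
      Matrix.diagonal_add]
    norm_num
  have hXD : (τ • D) ^ 2 + 2 * (τ • D) + 2 =
      Matrix.diagonal (fun i => (τ * d i) ^ 2 + 2 * (τ * d i) + 2) := by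
    rw [hDsm, h2diag, Matrix.diagonal_pow, Matrix.diagonal_mul_diagonal,
      Matrix.diagonal_add, Matrix.diagonal_add]
    rfl
  have hXDinv : (Matrix.diagonal (fun i => (τ * d i) ^ 2 + 2 * (τ * d i) + 2))⁻¹ =
      Matrix.diagonal (fun i => ((τ * d i) ^ 2 + 2 * (τ * d i) + 2)⁻¹) := by
    refine Matrix.inv_eq_right_inv ?_
    rw [Matrix.diagonal_mul_diagonal]
    rw [← Matrix.diagonal_one]
    exact congrArg Matrix.diagonal
      (funext fun i => mul_inv_cancel₀ (PadeAux.den_ne (τ * d i)))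
  have hpadeD : padeMatrix (τ • D) =
      Matrix.diagonal (fun i => 2 / ((τ * d i) ^ 2 + 2 * (τ * d i) + 2)) := by
    unfold padeMatrix
    rw [hXD, hXDinv, h2diag, Matrix.diagonal_mul_diagonal]
    exact congrArg Matrix.diagonal
      (funext fun i => (div_eq_mul_inv (2:ℝ) _).symm)
  have hE : NormedSpace.exp (-(τ • D)) - padeMatrix (τ • D) =
      Matrix.diagonal (fun i => PadeAux.f0 (τ * d i)) := by
    rw [hexpD, hpadeD, Matrix.diagonal_sub]
    rfl
  have hEnorm : ‖NormedSpace.exp (-(τ • D)) - padeMatrix (τ • D)‖ ≤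
      M * lmax ^ 3 * τ ^ 3 / 6 := by
    rw [hE, Matrix.linfty_opNorm_diagonal]
    have hR0 : (0:ℝ) ≤ M * lmax ^ 3 * τ ^ 3 / 6 :=
      div_nonneg (mul_nonneg (mul_nonneg hM0 (pow_nonneg hlpos.le 3)) (pow_nonneg hτ.le 3))
        (by norm_num)
    rw [pi_norm_le_iff_of_nonneg hR0]
    intro i
    rw [Real.norm_eq_abs]
    have hdi : 0 < d i := hDpos i
    have h1 : |PadeAux.f0 (τ * d i)| ≤ M * (τ * d i) ^ 3 / 6 :=
      PadeAux.f0_taylor_bound hub (by positivity)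
    refine h1.trans ?_
    have hdl : d i ≤ lmax := hlmax.2 ⟨i, rfl⟩
    calc M * (τ * d i) ^ 3 / 6 ≤ M * (τ * lmax) ^ 3 / 6 := by
          have h3 : (τ * d i) ^ 3 ≤ (τ * lmax) ^ 3 :=
            pow_le_pow_left₀ (by positivity) (mul_le_mul_of_nonneg_left hdl hτ.le) 3
          have h4 := mul_le_mul_of_nonneg_left h3 hM0
          linarith
    _ = M * lmax ^ 3 * τ ^ 3 / 6 := by ring
  rw [hdiffconj]
  calc ‖Q * (NormedSpace.exp (-(τ • D)) - padeMatrix (τ • D)) * Qᵀ‖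
      ≤ ‖Q * (NormedSpace.exp (-(τ • D)) - padeMatrix (τ • D))‖ * ‖Qᵀ‖ := norm_mul_le _ _
    _ ≤ ‖Q‖ * ‖NormedSpace.exp (-(τ • D)) - padeMatrix (τ • D)‖ * ‖Qᵀ‖ :=
        mul_le_mul_of_nonneg_right (norm_mul_le _ _) (norm_nonneg _)
    _ ≤ ‖Q‖ * (M * lmax ^ 3 * τ ^ 3 / 6) * ‖Qᵀ‖ :=
        mul_le_mul_of_nonneg_right
          (mul_le_mul_of_nonneg_left hEnorm (norm_nonneg _)) (norm_nonneg _)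
    _ = (‖Q‖ * ‖Qᵀ‖) * M * lmax ^ 3 * τ ^ 3 / 6 := by ring
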